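/- Let {p_θ : θ ∈ ℝ} be a family of probability measures on a measurable space Ω and let T = {T_n} be a weakly consistent estimator sequence, i.e. for every δ > 0 and every θ, p_θ^n{|T_n − θ| > δ} → 0 as n → ∞. Then for every θ ∈ ℝ, ε > 0 and every θ' with |θ' − θ| > ε, β(T,θ,ε) ≤ D(p_{θ'}‖p_θ), where D denotes the Kullback–Leibler divergence. In particular β(T,θ,ε) ≤ min{ inf_{θ' > θ+ε} D(p_{θ'}‖p_θ), inf_{θ' < θ−ε} D(p_{θ'}‖p_θ) }. -/

import Mathlib

open MeasureTheory Filter Set Topology ENNReal NNReal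

/-- `-log x`, with the convention `-log 0 = ∞`, as a map `ℝ≥0∞ → ℝ≥0∞`. -/
noncomputable def negLog (x : ℝ≥0∞) : ℝ≥0∞ :=
  if x = 0 then ⊤ else ENNReal.ofReal (-Real.log x.toReal)

/-- The `n`-fold product (i.i.d.) measure of `p`. -/
noncomputable def prodMeas {Ω : Type*} [MeasurableSpace Ω] (p : Measure Ω) (n : ℕ) :
    Measure (Fin n → Ω) :=
  Measure.pi fun _ => p

/-- `β(T,θ,ε) = liminf (-1/n) log p_θ^n { |T_n - θ| > ε }`. -/
noncomputable def betaAbs {Ω : Type*} [MeasurableSpace Ω] (p : ℝ → Measure Ω)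
    (T : (n : ℕ) → (Fin n → Ω) → ℝ) (θ ε : ℝ) : ℝ≥0∞ :=
  Filter.atTop.liminf fun n : ℕ =>
    negLog (prodMeas (p θ) n {x | ε < |T n x - θ|}) / (n : ℝ≥0∞)

/-- The Kullback–Leibler divergence `D(p‖q) = ∫ log (dp/dq) dp` if `p ≪ q` (and the
log-likelihood ratio is integrable), `+∞` otherwise. -/
noncomputable def klDiv {Ω : Type*} [MeasurableSpace Ω] (p q : Measure Ω) : ℝ≥0∞ :=
  open scoped Classical in
  if p ≪ q ∧ Integrable (llr p q) p then ENNReal.ofReal (∫ x, llr p q x ∂p) else ⊤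

/- ### Auxiliary lemmas -/

lemma lintegral_pi_prod {n : ℕ} {Ω : Type*} [MeasurableSpace Ω] (P : Measure Ω)
    [IsProbabilityMeasure P] (g : Fin n → Ω → ℝ≥0∞) (hg : ∀ i, Measurable (g i)) :
    ∫⁻ x, ∏ i, g i (x i) ∂(Measure.pi fun _ : Fin n => P) = ∏ i, ∫⁻ ω, g i ω ∂P := by
  induction n with
  | zero => simp
  | succ n ih =>
      have hmp := (measurePreserving_piFinSuccAbove (fun _ : Fin (n+1) => P) 0).symm
      have hmeas : Measurable fun x : Fin (n+1) → Ω => ∏ i, g i (x i) :=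
        Finset.measurable_prod _ fun i _ => (hg i).comp (measurable_pi_apply i)
      rw [← hmp.lintegral_comp hmeas]
      simp_rw [MeasurableEquiv.piFinSuccAbove_symm_apply, Fin.insertNthEquiv,
        Fin.prod_univ_succ, Fin.insertNth_zero]
      simp only [Fin.zero_succAbove, cast_eq, Function.comp_def, Fin.cons_zero,
        Fin.cons_succ, Equiv.coe_fn_mk]
      have hm2 : Measurable fun y : Fin n → Ω => ∏ i, g i.succ (y i) :=
        Finset.measurable_prod _ fun i _ => (hg i.succ).comp (measurable_pi_apply i)
      rw [lintegral_prod_mul (f := g 0) (g := fun y : Fin n → Ω => ∏ i, g i.succ (y i))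
        (hg 0).aemeasurable hm2.aemeasurable]
      rw [ih (fun i => g i.succ) (fun i => hg i.succ)]

lemma pi_eq_withDensity {n : ℕ} {Ω : Type*} [MeasurableSpace Ω] (P q : Measure Ω)
    [IsProbabilityMeasure P] [IsProbabilityMeasure q] (hq : q ≪ P) :
    Measure.pi (fun _ : Fin n => q) =
      (Measure.pi fun _ : Fin n => P).withDensity fun x => ∏ i, q.rnDeriv P (x i) := by
  have hfm : Measurable (q.rnDeriv P) := Measure.measurable_rnDeriv q P
  refine Measure.pi_eq fun s hs => ?_
  rw [withDensity_apply _ (MeasurableSet.univ_pi hs),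
    ← lintegral_indicator (MeasurableSet.univ_pi hs)]
  have heq : (univ.pi s).indicator (fun x : Fin n → Ω => ∏ i, q.rnDeriv P (x i))
      = fun x => ∏ i, (s i).indicator (q.rnDeriv P) (x i) := by
    funext x
    by_cases hx : x ∈ univ.pi s
    · rw [indicator_of_mem hx]
      exact Finset.prod_congr rfl fun i _ => (indicator_of_mem (hx i (mem_univ i)) _).symm
    · rw [indicator_of_notMem hx]
      rw [mem_univ_pi] at hx
      push_neg at hx
      obtain ⟨i, hi⟩ := hx
      exact (Finset.prod_eq_zero (Finset.mem_univ i)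
        (by rw [indicator_of_notMem hi])).symm
  rw [heq, lintegral_pi_prod P _ (fun i => hfm.indicator (hs i))]
  refine Finset.prod_congr rfl fun i _ => ?_
  rw [lintegral_indicator (hs i), ← withDensity_apply _ (hs i),
    Measure.withDensity_rnDeriv_eq q P hq]

lemma mul_log_le_setIntegral_llr {Ω : Type*} [MeasurableSpace Ω] (q P : Measure Ω)
    [IsProbabilityMeasure q] [IsProbabilityMeasure P] (hqP : q ≪ P)
    (hint : Integrable (llr q P) q) {S : Set Ω} :
    (q S).toReal * Real.log (q S).toReal ≤
      (∫ x in S, llr q P x ∂q) + (q S).toReal * Real.log (P S).toReal := by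
  by_cases hq0 : q S = 0
  · rw [hq0, Measure.restrict_eq_zero.mpr hq0]
    simp
  · have hP0 : P S ≠ 0 := fun h => hq0 (hqP h)
    set u := (q S).toReal with hu_def
    set v := (P S).toReal with hv_def
    have hu : 0 < u := ENNReal.toReal_pos hq0 (measure_ne_top q S)
    have hv : 0 < v := ENNReal.toReal_pos hP0 (measure_ne_top P S)
    set a := v / u with ha
    have hapos : 0 < a := div_pos hv hu
    set g : Ω → ℝ := fun x => (P.rnDeriv q x).toReal with hg
    have hgm : Measurable g := (Measure.measurable_rnDeriv P q).ennreal_toReal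
    have h_ae : ∀ᵐ x ∂q, llr P q x ≤ g x / a - 1 + Real.log a := by
      filter_upwards [Measure.rnDeriv_pos' hqP, Measure.rnDeriv_lt_top P q] with x h1 h2
      have hgx : 0 < g x := ENNReal.toReal_pos h1.ne' h2.ne
      have : Real.log (g x) = Real.log (g x / a) + Real.log a := by
        rw [Real.log_div hgx.ne' hapos.ne']; ring
      calc llr P q x = Real.log (g x) := rfl
        _ = Real.log (g x / a) + Real.log a := this
        _ ≤ (g x / a - 1) + Real.log a := by
            have := Real.log_le_sub_one_of_pos (div_pos hgx hapos)
            linarith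
    -- integrability facts
    have hgi : Integrable g (q.restrict S) :=
      integrable_toReal_of_lintegral_ne_top (Measure.measurable_rnDeriv P q).aemeasurable
        (ne_top_of_le_ne_top (measure_ne_top P S) (Measure.setLIntegral_rnDeriv_le S))
    have hllr_int : Integrable (llr P q) q := hint.neg.congr (neg_llr hqP)
    have hsub : Integrable (fun x => g x / a - 1) (q.restrict S) := by
      exact (hgi.div_const a).sub (integrable_const 1)
    have hdiv : Integrable (fun x => g x / a) (q.restrict S) := hgi.div_const a
    have hrhs_int : Integrable (fun x => g x / a - 1 + Real.log a) (q.restrict S) := by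
      exact hsub.add (integrable_const (Real.log a))
    -- integral bound
    have hstep : ∫ x in S, llr P q x ∂q ≤ ∫ x in S, (g x / a - 1 + Real.log a) ∂q :=
      integral_mono_ae hllr_int.restrict hrhs_int (ae_restrict_of_ae h_ae)
    have hgint_le : ∫ x in S, g x ∂q ≤ v := by
      have h1 : ∫ x in S, g x ∂q = (∫⁻ x in S, P.rnDeriv q x ∂q).toReal :=
        integral_toReal (Measure.measurable_rnDeriv P q).aemeasurable
          (ae_restrict_of_ae (Measure.rnDeriv_lt_top P q))
      rw [h1]
      exact ENNReal.toReal_mono (measure_ne_top P S) (Measure.setLIntegral_rnDeriv_le S)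
    have hrhs_eq : ∫ x in S, (g x / a - 1 + Real.log a) ∂q
        = (∫ x in S, g x ∂q) / a - u + u * Real.log a := by
      rw [integral_add hsub (integrable_const _), integral_sub hdiv (integrable_const 1),
        integral_div, integral_const, integral_const]
      simp only [Measure.real, Measure.restrict_apply_univ, smul_eq_mul, mul_one, hu_def]
    have hfinal : ∫ x in S, llr P q x ∂q ≤ u * Real.log a := by
      have hva : v / a = u := by rw [ha]; field_simp
      calc ∫ x in S, llr P q x ∂q ≤ (∫ x in S, g x ∂q) / a - u + u * Real.log a := by
            rw [← hrhs_eq]; exact hstep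
        _ ≤ v / a - u + u * Real.log a := by gcongr
        _ = u * Real.log a := by rw [hva]; ring
    have hneg : ∫ x in S, llr P q x ∂q = - ∫ x in S, llr q P x ∂q := by
      rw [← integral_neg]
      exact (integral_congr_ae (ae_restrict_of_ae (neg_llr hqP))).symm
    rw [hneg] at hfinal
    have hloga : Real.log a = Real.log v - Real.log u := Real.log_div hv.ne' hu.ne'
    rw [hloga] at hfinal
    nlinarith [hfinal]

lemma neg_one_le_mul_log {w : ℝ} (h0 : 0 ≤ w) (h1 : w ≤ 1) : -1 ≤ w * Real.log w := by
  rcases h0.eq_or_lt with h | h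
  · simp [← h]
  · have h2 : -Real.log w ≤ w⁻¹ - 1 := by
      rw [← Real.log_inv]; exact Real.log_le_sub_one_of_pos (inv_pos.mpr h)
    have h3 : w * (-Real.log w) ≤ w * (w⁻¹ - 1) := mul_le_mul_of_nonneg_left h2 h0
    have h4 : w * (w⁻¹ - 1) = 1 - w := by field_simp
    nlinarith

lemma integral_llr_nonneg {Ω : Type*} [MeasurableSpace Ω] (Q P : Measure Ω)
    [IsProbabilityMeasure Q] [IsProbabilityMeasure P] (hQP : Q ≪ P)
    (hint : Integrable (llr Q P) Q) : 0 ≤ ∫ x, llr Q P x ∂Q := by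
  have h := mul_log_le_setIntegral_llr Q P hQP hint (S := univ)
  simp only [measure_univ, ENNReal.toReal_one, Real.log_one, one_mul, mul_zero, add_zero,
    setIntegral_univ] at h
  exact h

lemma neg_log_le_div {Ω : Type*} [MeasurableSpace Ω] (Q P : Measure Ω)
    [IsProbabilityMeasure Q] [IsProbabilityMeasure P]
    (hQP : Q ≪ P) (hint : Integrable (llr Q P) Q) {A : Set Ω} (hA : MeasurableSet A)
    (hQA : Q A ≠ 0) :
    -Real.log (P A).toReal ≤ (∫ x, llr Q P x ∂Q + 2) / (Q A).toReal := by
  set D := ∫ x, llr Q P x ∂Q with hD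
  set u := (Q A).toReal with hu_def
  have hu : 0 < u := ENNReal.toReal_pos hQA (measure_ne_top Q A)
  have hu1 : u ≤ 1 := by
    simpa using ENNReal.toReal_mono (by simp) (prob_le_one (μ := Q) (s := A))
  have hw0 : (0:ℝ) ≤ (Q Aᶜ).toReal := ENNReal.toReal_nonneg
  have hw1 : (Q Aᶜ).toReal ≤ 1 := by
    simpa using ENNReal.toReal_mono (by simp) (prob_le_one (μ := Q) (s := Aᶜ))
  have h1 := mul_log_le_setIntegral_llr Q P hQP hint (S := A)
  have h2 := mul_log_le_setIntegral_llr Q P hQP hint (S := Aᶜ)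
  have hsplit : (∫ x in A, llr Q P x ∂Q) + ∫ x in Aᶜ, llr Q P x ∂Q = D :=
    integral_add_compl hA hint
  have hlogc : Real.log (P Aᶜ).toReal ≤ 0 :=
    Real.log_nonpos ENNReal.toReal_nonneg
      (by simpa using ENNReal.toReal_mono (by simp) (prob_le_one (μ := P) (s := Aᶜ)))
  have hcompl_ge : (-1:ℝ) ≤ ∫ x in Aᶜ, llr Q P x ∂Q := by
    have := neg_one_le_mul_log hw0 hw1
    nlinarith [mul_nonpos_of_nonneg_of_nonpos hw0 hlogc]
  have hAint_le : ∫ x in A, llr Q P x ∂Q ≤ D + 1 := by linarith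
  have hulogu : -1 ≤ u * Real.log u := neg_one_le_mul_log hu.le hu1
  have hkey : -(u * Real.log (P A).toReal) ≤ D + 2 := by nlinarith
  rw [le_div_iff₀ hu]
  nlinarith

lemma measurePreserving_eval_pi {n : ℕ} {Ω : Type*} [MeasurableSpace Ω] (q : Measure Ω)
    [IsProbabilityMeasure q] (i : Fin n) :
    MeasurePreserving (Function.eval i) (Measure.pi fun _ : Fin n => q) q := by
  refine ⟨measurable_pi_apply i, ?_⟩
  refine Measure.ext fun s hs => ?_
  rw [Measure.map_apply (measurable_pi_apply i) hs]
  have : Function.eval i ⁻¹' s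
      = Set.pi univ (Function.update (fun _ : Fin n => (univ : Set Ω)) i s) := by
    rw [univ_pi_update_univ]
  rw [this, Measure.pi_pi]
  rw [Finset.prod_eq_single_of_mem i (Finset.mem_univ i)]
  · rw [Function.update_self]
  · intro j _ hj
    rw [Function.update_of_ne hj]
    simp

lemma llr_pi_sum {n : ℕ} {Ω : Type*} [MeasurableSpace Ω] (q P : Measure Ω)
    [IsProbabilityMeasure q] [IsProbabilityMeasure P] (hq : q ≪ P)
    (hwd : Measure.pi (fun _ : Fin n => q) =
      (Measure.pi fun _ : Fin n => P).withDensity fun x => ∏ i, q.rnDeriv P (x i)) :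
    llr (Measure.pi fun _ : Fin n => q) (Measure.pi fun _ : Fin n => P)
      =ᵐ[Measure.pi fun _ : Fin n => q] fun x => ∑ i, llr q P (x i) := by
  set Qn := Measure.pi (fun _ : Fin n => q) with hQn
  set Pn := Measure.pi (fun _ : Fin n => P) with hPn
  have hgm : Measurable fun x : Fin n → Ω => ∏ i, q.rnDeriv P (x i) :=
    Finset.measurable_prod _ fun i _ =>
      (Measure.measurable_rnDeriv q P).comp (measurable_pi_apply i)
  have habs : Qn ≪ Pn := hwd ▸ withDensity_absolutelyContinuous _ _
  have hrn : Qn.rnDeriv Pn =ᵐ[Pn] fun x => ∏ i, q.rnDeriv P (x i) := by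
    rw [hwd]; exact Measure.rnDeriv_withDensity _ hgm
  have hall : ∀ᵐ x ∂Qn, ∀ i, 0 < q.rnDeriv P (x i) ∧ q.rnDeriv P (x i) < ∞ := by
    refine ae_all_iff.2 fun i => ?_
    have h : ∀ᵐ ω ∂q, 0 < q.rnDeriv P ω ∧ q.rnDeriv P ω < ∞ :=
      (Measure.rnDeriv_pos hq).and (hq.ae_le (Measure.rnDeriv_lt_top q P))
    exact (Measure.tendsto_eval_ae_ae (μ := fun _ : Fin n => q) (i := i)).eventually h
  filter_upwards [habs.ae_le hrn, hall] with x hx hco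
  rw [llr, hx, ENNReal.toReal_prod,
    Real.log_prod (fun i _ => (ENNReal.toReal_pos (hco i).1.ne' (hco i).2.ne).ne')]
  rfl

lemma integrable_integral_llr_pi {n : ℕ} {Ω : Type*} [MeasurableSpace Ω] (q P : Measure Ω)
    [IsProbabilityMeasure q] [IsProbabilityMeasure P] (hq : q ≪ P)
    (hint : Integrable (llr q P) q)
    (hwd : Measure.pi (fun _ : Fin n => q) =
      (Measure.pi fun _ : Fin n => P).withDensity fun x => ∏ i, q.rnDeriv P (x i)) :
    Integrable (llr (Measure.pi fun _ : Fin n => q) (Measure.pi fun _ : Fin n => P))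
        (Measure.pi fun _ : Fin n => q) ∧
      ∫ x, llr (Measure.pi fun _ : Fin n => q) (Measure.pi fun _ : Fin n => P) x
          ∂(Measure.pi fun _ : Fin n => q) = n * ∫ ω, llr q P ω ∂q := by
  have hco : ∀ i : Fin n, Integrable (fun x : Fin n → Ω => llr q P (x i))
      (Measure.pi fun _ : Fin n => q) := by
    intro i
    have hmp := measurePreserving_eval_pi q i
    have := (integrable_map_measure (f := Function.eval i) (g := llr q P)
      (by rw [hmp.map_eq]; exact (measurable_llr q P).aestronglyMeasurable)
      (measurable_pi_apply i).aemeasurable).mp (by rw [hmp.map_eq]; exact hint)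
    exact this
  have hsum : Integrable (fun x : Fin n → Ω => ∑ i, llr q P (x i))
      (Measure.pi fun _ : Fin n => q) := integrable_finset_sum _ fun i _ => hco i
  have hsum_val : ∫ x, (∑ i, llr q P (x i)) ∂(Measure.pi fun _ : Fin n => q)
      = n * ∫ ω, llr q P ω ∂q := by
    rw [integral_finset_sum _ fun i _ => hco i]
    have : ∀ i : Fin n, ∫ x, llr q P (x i) ∂(Measure.pi fun _ : Fin n => q)
        = ∫ ω, llr q P ω ∂q := by
      intro i
      have hmp := measurePreserving_eval_pi q i
      calc ∫ x : Fin n → Ω, llr q P (x i) ∂(Measure.pi fun _ : Fin n => q)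
          = ∫ ω, llr q P ω ∂(Measure.map (Function.eval i) (Measure.pi fun _ : Fin n => q)) :=
            (integral_map (measurable_pi_apply i).aemeasurable
              (by rw [hmp.map_eq]; exact (measurable_llr q P).aestronglyMeasurable)).symm
        _ = ∫ ω, llr q P ω ∂q := by rw [hmp.map_eq]
    simp [this, Finset.sum_const]
  have hae := llr_pi_sum q P hq hwd
  exact ⟨hsum.congr hae.symm, by rw [integral_congr_ae hae, hsum_val]⟩

/-- Bahadur's inequality (Baha4): for a weakly consistent estimator sequence `T`,
`β(T,θ,ε) ≤ D(p_{θ'}‖p_θ)` whenever `|θ' - θ| > ε`; in particular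
`β(T,θ,ε) ≤ min{inf_{θ' > θ+ε} D(p_{θ'}‖p_θ), inf_{θ' < θ-ε} D(p_{θ'}‖p_θ)}`. -/
theorem stmt19 {Ω : Type*} [MeasurableSpace Ω] (p : ℝ → Measure Ω)
    (hprob : ∀ θ, IsProbabilityMeasure (p θ))
    (T : (n : ℕ) → (Fin n → Ω) → ℝ) (hT_meas : ∀ n, Measurable (T n))
    (hT_consistent : ∀ θ : ℝ, ∀ δ > (0 : ℝ),
      Tendsto (fun n : ℕ => prodMeas (p θ) n {x | δ < |T n x - θ|}) atTop (𝓝 0)) :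
    ∀ (θ ε : ℝ), 0 < ε →
      (∀ θ' : ℝ, ε < |θ' - θ| → betaAbs p T θ ε ≤ klDiv (p θ') (p θ)) ∧
      betaAbs p T θ ε ≤
        min (⨅ θ' ∈ {θ' : ℝ | θ + ε < θ'}, klDiv (p θ') (p θ))
            (⨅ θ' ∈ {θ' : ℝ | θ' < θ - ε}, klDiv (p θ') (p θ)) := by
  intro θ ε hε
  have part1 : ∀ θ' : ℝ, ε < |θ' - θ| → betaAbs p T θ ε ≤ klDiv (p θ') (p θ) := by
    intro θ' hθ'
    haveI := hprob θ
    haveI := hprob θ'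
    by_cases hcase : (p θ') ≪ (p θ) ∧ Integrable (llr (p θ') (p θ)) (p θ')
    swap
    · rw [klDiv, if_neg hcase]; exact le_top
    obtain ⟨hac, hint⟩ := hcase
    rw [klDiv, if_pos ⟨hac, hint⟩]
    set q := p θ' with hq_def
    set P := p θ with hP_def
    set D := ∫ x, llr q P x ∂q with hD_def
    have hD0 : 0 ≤ D := integral_llr_nonneg q P hac hint
    -- the events
    set A : (n : ℕ) → Set (Fin n → Ω) := fun n => {x | ε < |T n x - θ|} with hA_def
    have hAmeas : ∀ n, MeasurableSet (A n) := fun n =>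
      measurableSet_lt measurable_const ((hT_meas n).sub measurable_const).abs
    -- consistency under θ'
    set δ := (|θ' - θ| - ε) / 2 with hδ_def
    have hδ : 0 < δ := by simp only [hδ_def]; linarith
    have hsub : ∀ n, (A n)ᶜ ⊆ {x | δ < |T n x - θ'|} := by
      intro n x hx
      simp only [hA_def, mem_compl_iff, mem_setOf_eq, not_lt] at hx
      simp only [mem_setOf_eq]
      have h1 : |θ' - θ| - |T n x - θ| ≤ |T n x - θ'| := by
        have := abs_sub_abs_le_abs_sub (θ' - θ) (T n x - θ)
        have heq : (θ' - θ) - (T n x - θ) = θ' - T n x := by ring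
        rw [heq] at this
        rw [abs_sub_comm (T n x) θ']
        exact this
      linarith
    have htendc : Tendsto (fun n => prodMeas q n ((A n)ᶜ)) atTop (𝓝 0) := by
      refine tendsto_of_tendsto_of_tendsto_of_le_of_le tendsto_const_nhds
        (hT_consistent θ' δ hδ) (fun n => zero_le) (fun n => measure_mono (hsub n))
    have htoReal : Tendsto (fun n => (prodMeas q n ((A n)ᶜ)).toReal) atTop (𝓝 0) := by
      have := (ENNReal.tendsto_toReal (a := 0) (by simp)).comp htendc
      simpa [Function.comp_def] using this
    have hQA_toReal : Tendsto (fun n => (prodMeas q n (A n)).toReal) atTop (𝓝 1) := by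
      have heq : ∀ n, (prodMeas q n (A n)).toReal = 1 - (prodMeas q n ((A n)ᶜ)).toReal := by
        intro n
        haveI : IsProbabilityMeasure (prodMeas q n) :=
          (inferInstance : IsProbabilityMeasure (Measure.pi fun _ : Fin n => q))
        have h2 : (prodMeas q n ((A n)ᶜ)).toReal = 1 - (prodMeas q n (A n)).toReal := by
          rw [prob_compl_eq_one_sub (hAmeas n), ENNReal.toReal_sub_of_le prob_le_one (by simp)]
          simp
        linarith
      simp_rw [heq]
      have := tendsto_const_nhds (x := (1:ℝ)) (f := atTop (α := ℕ)) |>.sub htoReal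
      simpa using this
    -- reduce to a single real bound
    suffices H : ∀ c : ℝ, D < c → betaAbs p T θ ε ≤ ENNReal.ofReal c by
      refine ENNReal.le_of_forall_pos_le_add fun κ hκ _ => ?_
      calc betaAbs p T θ ε ≤ ENNReal.ofReal (D + κ) := H _ (lt_add_of_pos_right D (by exact_mod_cast hκ))
        _ = ENNReal.ofReal D + ENNReal.ofReal κ := ENNReal.ofReal_add hD0 κ.coe_nonneg
        _ = ENNReal.ofReal D + κ := by rw [ENNReal.ofReal_coe_nnreal]
    intro c hc
    have hc0 : 0 < c := lt_of_le_of_lt hD0 hc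
    set τ := (D + c) / (2 * c) with hτ_def
    have hτ0 : 0 < τ := by positivity
    have hτ1 : τ < 1 := by
      rw [hτ_def, div_lt_one (by positivity)]; linarith
    have hcτ : c * τ = (D + c) / 2 := by
      rw [hτ_def]; field_simp
    have hev1 : ∀ᶠ n in atTop, τ ≤ (prodMeas q n (A n)).toReal :=
      hQA_toReal.eventually (eventually_ge_nhds hτ1)
    have hev2 : ∀ᶠ n : ℕ in atTop, (4:ℝ)/(c - D) ≤ (n:ℝ) :=
      tendsto_natCast_atTop_atTop.eventually_ge_atTop _
    have hmain : ∀ᶠ n in atTop,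
        negLog (prodMeas P n (A n)) / (n : ℝ≥0∞) ≤ ENNReal.ofReal c := by
      filter_upwards [hev1, hev2, eventually_ge_atTop 1] with n h1 h2 hn1
      haveI : IsProbabilityMeasure (prodMeas q n) :=
        (inferInstance : IsProbabilityMeasure (Measure.pi fun _ : Fin n => q))
      haveI : IsProbabilityMeasure (prodMeas P n) :=
        (inferInstance : IsProbabilityMeasure (Measure.pi fun _ : Fin n => P))
      have hn0 : (0:ℝ) < n := by exact_mod_cast hn1
      have hQAn : prodMeas q n (A n) ≠ 0 := by
        intro h0
        rw [show prodMeas q n (A n) = 0 from h0] at h1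
        simp at h1
        linarith
      have hwd := pi_eq_withDensity P q hac (n := n)
      have habs : prodMeas q n ≪ prodMeas P n := by
        rw [prodMeas, prodMeas, hwd]
        exact withDensity_absolutelyContinuous _ _
      obtain ⟨hIntn, hvaln⟩ := integrable_integral_llr_pi q P hac hint hwd
      have hbound := neg_log_le_div (prodMeas q n) (prodMeas P n) habs
        (by rw [prodMeas, prodMeas]; exact hIntn) (hAmeas n) hQAn
      rw [show ∫ x, llr (prodMeas q n) (prodMeas P n) x ∂(prodMeas q n)
          = (n : ℝ) * D from hvaln] at hbound
      -- numeric chain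
      have hnum0 : (0:ℝ) ≤ (n:ℝ) * D + 2 := by positivity
      have hchain : -Real.log ((prodMeas P n (A n)).toReal) ≤ (n:ℝ) * c := by
        have hstep1 : ((n:ℝ) * D + 2) / (prodMeas q n (A n)).toReal
            ≤ ((n:ℝ) * D + 2) / τ := div_le_div_of_nonneg_left hnum0 hτ0 h1
        have hstep2 : ((n:ℝ) * D + 2) / τ ≤ (n:ℝ) * c := by
          rw [div_le_iff₀ hτ0]
          have h4 : (4:ℝ) ≤ (n:ℝ) * (c - D) := by
            rw [div_le_iff₀ (by linarith : (0:ℝ) < c - D)] at h2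
            linarith
          have : (n:ℝ) * c * τ = (n:ℝ) * ((D + c)/2) := by
            rw [mul_assoc, hcτ]
          rw [this]
          nlinarith
        exact le_trans (le_trans hbound hstep1) hstep2
      -- P-measure of A n is nonzero
      have hPAn : prodMeas P n (A n) ≠ 0 := fun h0 => hQAn (habs h0)
      rw [negLog, if_neg hPAn]
      have hle : ENNReal.ofReal (-Real.log ((prodMeas P n (A n)).toReal))
          ≤ ENNReal.ofReal ((n:ℝ) * c) := ENNReal.ofReal_le_ofReal hchain
      calc ENNReal.ofReal (-Real.log ((prodMeas P n (A n)).toReal)) / (n : ℝ≥0∞)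
          ≤ ENNReal.ofReal ((n:ℝ) * c) / (n : ℝ≥0∞) := by
            exact ENNReal.div_le_div_right hle _
        _ = ENNReal.ofReal c := by
            rw [show ((n : ℕ) : ℝ≥0∞) = ENNReal.ofReal (n:ℝ) by
                rw [ENNReal.ofReal_natCast],
              ← ENNReal.ofReal_div_of_pos hn0]
            congr 1
            field_simp
    calc betaAbs p T θ ε ≤ atTop.liminf (fun _ : ℕ => ENNReal.ofReal c) := by
          rw [betaAbs]
          exact Filter.liminf_le_liminf hmain
      _ = ENNReal.ofReal c := Filter.liminf_const _
  refine ⟨part1, le_min ?_ ?_⟩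
  · refine le_iInf fun θ' => le_iInf fun hθ' => part1 θ' ?_
    have : θ + ε < θ' := hθ'
    calc ε < θ' - θ := by linarith
      _ ≤ |θ' - θ| := le_abs_self _
  · refine le_iInf fun θ' => le_iInf fun hθ' => part1 θ' ?_
    have : θ' < θ - ε := hθ'
    calc ε < θ - θ' := by linarith
      _ ≤ |θ' - θ| := by rw [abs_sub_comm]; exact le_abs_self _
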